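/- Define an ordering on the free commutative semiring Rig[x] on one generator as follows: elements of Rig[x] are finite nonempty multisets of monomials x^n (plus the additive identity θ); write u as u_1 + ... + u_n with exponents in decreasing order and compare the resulting exponent sequences lexicographically (a proper prefix being smaller). Then this ordering is a monomial ordering: it is a well-ordering, and it is compatible with both multiplication by monomials and addition of monomials (w > v implies u|_w > u|_v for any context u with one occurrence of a placeholder). -/

import Mathlib

/-- The free commutative semiring `Rig[x]` on one generator, modelled as
finite multisets of exponents: `θ` is the empty multiset, the monomial `xⁿ`
is `{n}`, `∘` (addition) is multiset union, and multiplication by the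
monomial `xᵏ` adds `k` to every exponent. -/
abbrev RigX : Type := Multiset ℕ

/-- The sequence of exponents of `u ∈ Rig[x]` in decreasing order. -/
def descExponents (u : RigX) : List ℕ := (u.sort (· ≤ ·)).reverse

/-- The ordering on `Rig[x]`: compare the decreasing exponent sequences
lexicographically, a proper prefix being smaller. -/
def rigLt (u v : RigX) : Prop :=
  List.Lex (· < ·) (descExponents u) (descExponents v)

/- ## Auxiliary lemmas -/

lemma descExponents_sorted (u : RigX) : (descExponents u).Pairwise (· ≥ ·) := by
  have h := Multiset.pairwise_sort u (· ≤ ·)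
  unfold descExponents
  exact List.pairwise_reverse.2 h

lemma count_descExponents (u : RigX) (n : ℕ) :
    (descExponents u).count n = u.count n := by
  unfold descExponents
  rw [(List.reverse_perm _).count_eq, ← Multiset.coe_count, Multiset.sort_eq]

lemma descExponents_injective : Function.Injective descExponents := by
  intro u v h
  have h1 : u.sort (· ≤ ·) = v.sort (· ≤ ·) := by
    have := congrArg List.reverse h
    simpa [descExponents] using this
  have h2 : ((u.sort (· ≤ ·) : List ℕ) : Multiset ℕ) = ((v.sort (· ≤ ·) : List ℕ) : Multiset ℕ) :=
    congrArg _ h1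
  rwa [Multiset.sort_eq, Multiset.sort_eq] at h2

lemma count_eq_zero_of_sorted_gt {a : ℕ} {t : List ℕ}
    (h : (a :: t).Pairwise (· ≥ ·)) {m : ℕ} (hm : a < m) : (a :: t).count m = 0 := by
  rw [List.count_eq_zero]
  intro hmem
  rcases List.mem_cons.1 hmem with rfl | hmem
  · exact lt_irrefl _ hm
  · exact absurd ((List.pairwise_cons.1 h).1 m hmem) (by omega)

/-- The key characterization: lexicographic comparison of the decreasing
exponent lists is equivalent to comparison of the counts at the largest
exponent where the two lists differ. -/
lemma lex_iff_count : ∀ {l₁ l₂ : List ℕ}, l₁.Pairwise (· ≥ ·) → l₂.Pairwise (· ≥ ·) →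
    (List.Lex (· < ·) l₁ l₂ ↔
      ∃ n, l₁.count n < l₂.count n ∧ ∀ m, n < m → l₁.count m = l₂.count m) := by
  intro l₁
  induction l₁ with
  | nil =>
    intro l₂ _ h₂
    cases l₂ with
    | nil =>
      simp only [List.count_nil]
      constructor
      · intro h; cases h
      · rintro ⟨n, hn, -⟩; omega
    | cons b t₂ =>
      constructor
      · intro _
        refine ⟨b, ?_, fun m hm => ?_⟩
        · simp [List.count_cons]
        · rw [List.count_nil, count_eq_zero_of_sorted_gt h₂ hm]
      · intro _; exact List.Lex.nil
  | cons a t₁ ih =>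
    intro l₂ h₁ h₂
    cases l₂ with
    | nil =>
      constructor
      · intro h; exact absurd h List.not_lex_nil
      · rintro ⟨n, hn, -⟩; simp at hn
    | cons b t₂ =>
      rcases lt_trichotomy a b with hab | rfl | hab
      · constructor
        · intro _
          refine ⟨b, ?_, fun m hm => ?_⟩
          · rw [count_eq_zero_of_sorted_gt h₁ hab]
            simp [List.count_cons]
          · rw [count_eq_zero_of_sorted_gt h₁ (by omega),
              count_eq_zero_of_sorted_gt h₂ hm]
        · intro _; exact List.Lex.rel hab
      · have key : ∀ n, (a :: t₁).count n < (a :: t₂).count n ↔ t₁.count n < t₂.count n := by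
          intro n
          simp only [List.count_cons]
          rcases eq_or_ne n a with rfl | hna <;> simp [*]
        have key' : ∀ n, (a :: t₁).count n = (a :: t₂).count n ↔ t₁.count n = t₂.count n := by
          intro n
          simp only [List.count_cons]
          rcases eq_or_ne n a with rfl | hna <;> simp [*]
        rw [List.lex_cons_iff, ih (List.pairwise_cons.1 h₁).2 (List.pairwise_cons.1 h₂).2]
        constructor
        · rintro ⟨n, hn, hm⟩
          exact ⟨n, (key n).2 hn, fun m hnm => (key' m).2 (hm m hnm)⟩
        · rintro ⟨n, hn, hm⟩
          exact ⟨n, (key n).1 hn, fun m hnm => (key' m).1 (hm m hnm)⟩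
      · constructor
        · intro h
          cases h with
          | rel h => omega
          | cons h => omega
        · rintro ⟨n, hn, hm⟩
          have hmem : n ∈ b :: t₂ := by
            rw [← List.count_pos_iff]; omega
          have hnb : n ≤ b := by
            rcases List.mem_cons.1 hmem with rfl | hmem
            · exact le_rfl
            · exact (List.pairwise_cons.1 h₂).1 n hmem
          have := hm a (by omega)
          rw [count_eq_zero_of_sorted_gt h₂ hab] at this
          simp [List.count_cons] at this

/-- `rigLt` in terms of multiset counts. -/
lemma rigLt_iff_count (u v : RigX) :
    rigLt u v ↔ ∃ n, u.count n < v.count n ∧ ∀ m, n < m → u.count m = v.count m := by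
  rw [rigLt, lex_iff_count (descExponents_sorted u) (descExponents_sorted v)]
  simp only [count_descExponents]

lemma rigLt_subrelation :
    ∀ {u v : RigX}, rigLt u v →
      Finsupp.Lex (· > ·) (· < ·) (Multiset.toFinsupp u) (Multiset.toFinsupp v) := by
  intro u v h
  obtain ⟨n, hn, hm⟩ := (rigLt_iff_count u v).1 h
  exact Finsupp.lex_def.2 ⟨n, fun d hd => by
    simpa [Multiset.toFinsupp_apply] using hm d hd, by simpa [Multiset.toFinsupp_apply] using hn⟩

lemma rigLt_wf : WellFounded rigLt := by
  haveI : IsTrichotomous ℕ (· > ·) := IsTrichotomous.swap _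
  have hwf : WellFounded (Finsupp.Lex (· > ·) (· < ·) : (ℕ →₀ ℕ) → (ℕ →₀ ℕ) → Prop) :=
    Finsupp.Lex.wellFounded' (fun n => (Nat.zero_le n).not_gt)
      (wellFounded_lt) (wellFounded_lt)
  exact Subrelation.wf (fun {u v} h => rigLt_subrelation h)
    (InvImage.wf Multiset.toFinsupp hwf)

theorem stmt_17 :
    IsWellOrder RigX rigLt ∧
    ∀ v w : RigX, rigLt v w → ∀ (k : ℕ) (u : RigX),
      rigLt (Multiset.map (· + k) v + u) (Multiset.map (· + k) w + u) := by
  constructor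
  · haveI : IsTrichotomous RigX rigLt := by
      constructor
      intro u v h1 h2
      rcases trichotomous_of (List.Lex (α := ℕ) (· < ·))
        (descExponents u) (descExponents v) with h | h | h
      · exact absurd h h1
      · exact descExponents_injective h
      · exact absurd h h2
    haveI : IsTrans RigX rigLt := by
      constructor
      intro a b c hab hbc
      exact List.lex_trans (fun h1 h2 => Nat.lt_trans h1 h2) hab hbc
    haveI : IsWellFounded RigX rigLt := ⟨rigLt_wf⟩
    constructor
  · intro v w hvw k u
    obtain ⟨n, hn, hm⟩ := (rigLt_iff_count v w).1 hvw
    have hinj : Function.Injective (· + k) := add_left_injective k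
    have hcnt : ∀ (s : RigX) (j : ℕ),
        (Multiset.map (· + k) s).count (j + k) = s.count j := by
      intro s j
      simpa using Multiset.count_map_eq_count' (· + k) s hinj j
    refine (rigLt_iff_count _ _).2 ⟨n + k, ?_, ?_⟩
    · rw [Multiset.count_add, Multiset.count_add, hcnt v n, hcnt w n]
      omega
    · intro m hm'
      rw [show m = (m - k) + k by omega, Multiset.count_add, Multiset.count_add,
        hcnt v _, hcnt w _, hm (m - k) (by omega)]
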